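/- arXiv:1311.1412 — 4 statements merged into one kernel-verified Lean document; each statement's English description precedes it below -/
import Mathlib

section
/- Let F : U → ℝ² be a C² diffeomorphism on an open subset U of the Euclidean plane, written (u,v) = F(x,y). If for every C² function φ one has Δφ = 0 in the (x,y)-coordinates if and only if Δ'φ = 0 in the (u,v)-coordinates, then the partial derivatives of u and v satisfy either the Cauchy–Riemann equations u_x = v_y and u_y = -v_x, or the anti-Cauchy–Riemann equations u_x = -v_y and u_y = v_x, at every point of U. -/
/-- Partial derivative in the first coordinate. -/
noncomputable def pdx (φ : ℝ × ℝ → ℝ) (p : ℝ × ℝ) : ℝ :=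
  deriv (fun s => φ (s, p.2)) p.1

/-- Partial derivative in the second coordinate. -/
noncomputable def pdy (φ : ℝ × ℝ → ℝ) (p : ℝ × ℝ) : ℝ :=
  deriv (fun s => φ (p.1, s)) p.2

/-- Euclidean Laplacian ∂²/∂x² + ∂²/∂y². -/
noncomputable def lap (φ : ℝ × ℝ → ℝ) (p : ℝ × ℝ) : ℝ :=
  pdx (pdx φ) p + pdy (pdy φ) p

open Filter

section helpers

variable {f g : ℝ × ℝ → ℝ} {U : Set (ℝ × ℝ)} {q : ℝ × ℝ}

lemma hasDeriv_slice_x (hf : DifferentiableAt ℝ f q) :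
    HasDerivAt (fun s => f (s, q.2)) (pdx f q) q.1 := by
  have h1 : DifferentiableAt ℝ (fun s : ℝ => (s, q.2)) q.1 :=
    differentiableAt_id.prodMk (differentiableAt_const _)
  have h2 : DifferentiableAt ℝ (fun s => f (s, q.2)) q.1 :=
    DifferentiableAt.comp q.1 hf h1
  exact h2.hasDerivAt

lemma hasDeriv_slice_y (hf : DifferentiableAt ℝ f q) :
    HasDerivAt (fun s => f (q.1, s)) (pdy f q) q.2 := by
  have h1 : DifferentiableAt ℝ (fun s : ℝ => (q.1, s)) q.2 :=
    (differentiableAt_const _).prodMk differentiableAt_id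
  have h2 : DifferentiableAt ℝ (fun s => f (q.1, s)) q.2 :=
    DifferentiableAt.comp q.2 hf h1
  exact h2.hasDerivAt

lemma diffAt_of_C2 (hU : IsOpen U) (hf : ContDiffOn ℝ 2 f U) (hq : q ∈ U) :
    DifferentiableAt ℝ f q :=
  (hf.contDiffAt (hU.mem_nhds hq)).differentiableAt (by norm_num)

lemma pdx_contDiffOn (hU : IsOpen U) (hf : ContDiffOn ℝ 2 f U) :
    ContDiffOn ℝ 1 (pdx f) U := by
  have h1 : ContDiffOn ℝ 1 (fun q => fderiv ℝ f q (1, 0)) U :=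
    (hf.fderiv_of_isOpen hU (by norm_num)).clm_apply contDiffOn_const
  refine h1.congr fun q hq => ?_
  have hd : DifferentiableAt ℝ f q := diffAt_of_C2 hU hf hq
  have hline : HasDerivAt (fun s : ℝ => (s, q.2)) ((1 : ℝ), (0 : ℝ)) q.1 :=
    (hasDerivAt_id q.1).prodMk (hasDerivAt_const q.1 q.2)
  exact (hd.hasFDerivAt.comp_hasDerivAt q.1 hline).deriv

lemma pdy_contDiffOn (hU : IsOpen U) (hf : ContDiffOn ℝ 2 f U) :
    ContDiffOn ℝ 1 (pdy f) U := by
  have h1 : ContDiffOn ℝ 1 (fun q => fderiv ℝ f q (0, 1)) U :=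
    (hf.fderiv_of_isOpen hU (by norm_num)).clm_apply contDiffOn_const
  refine h1.congr fun q hq => ?_
  have hd : DifferentiableAt ℝ f q := diffAt_of_C2 hU hf hq
  have hline : HasDerivAt (fun s : ℝ => (q.1, s)) ((0 : ℝ), (1 : ℝ)) q.2 :=
    (hasDerivAt_const q.2 q.1).prodMk (hasDerivAt_id q.2)
  exact (hd.hasFDerivAt.comp_hasDerivAt q.2 hline).deriv

lemma pdx_mul (hf : DifferentiableAt ℝ f q) (hg : DifferentiableAt ℝ g q) :
    pdx (fun q => f q * g q) q = pdx f q * g q + f q * pdx g q :=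
  ((hasDeriv_slice_x hf).mul (hasDeriv_slice_x hg)).deriv

lemma pdy_mul (hf : DifferentiableAt ℝ f q) (hg : DifferentiableAt ℝ g q) :
    pdy (fun q => f q * g q) q = pdy f q * g q + f q * pdy g q :=
  ((hasDeriv_slice_y hf).mul (hasDeriv_slice_y hg)).deriv

lemma pdx_sub (hf : DifferentiableAt ℝ f q) (hg : DifferentiableAt ℝ g q) :
    pdx (fun q => f q - g q) q = pdx f q - pdx g q :=
  ((hasDeriv_slice_x hf).sub (hasDeriv_slice_x hg)).deriv

lemma pdy_sub (hf : DifferentiableAt ℝ f q) (hg : DifferentiableAt ℝ g q) :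
    pdy (fun q => f q - g q) q = pdy f q - pdy g q :=
  ((hasDeriv_slice_y hf).sub (hasDeriv_slice_y hg)).deriv

end helpers

section second
variable {f g : ℝ × ℝ → ℝ} {U : Set (ℝ × ℝ)} {q : ℝ × ℝ}

lemma pdx2_mul (hU : IsOpen U) (hf : ContDiffOn ℝ 2 f U) (hg : ContDiffOn ℝ 2 g U)
    (hq : q ∈ U) :
    pdx (pdx (fun q => f q * g q)) q
      = pdx (pdx f) q * g q + 2 * (pdx f q * pdx g q) + f q * pdx (pdx g) q := by
  have hdf : ∀ r ∈ U, DifferentiableAt ℝ f r := fun r hr => diffAt_of_C2 hU hf hr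
  have hdg : ∀ r ∈ U, DifferentiableAt ℝ g r := fun r hr => diffAt_of_C2 hU hg hr
  have hpf : DifferentiableAt ℝ (pdx f) q :=
    ((pdx_contDiffOn hU hf).contDiffAt (hU.mem_nhds hq)).differentiableAt one_ne_zero
  have hpg : DifferentiableAt ℝ (pdx g) q :=
    ((pdx_contDiffOn hU hg).contDiffAt (hU.mem_nhds hq)).differentiableAt one_ne_zero
  have hev : (fun s => pdx (fun q => f q * g q) (s, q.2))
      =ᶠ[nhds q.1] fun s => pdx f (s, q.2) * g (s, q.2) + f (s, q.2) * pdx g (s, q.2) := by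
    have hV : IsOpen {s : ℝ | (s, q.2) ∈ U} :=
      hU.preimage (continuous_id.prodMk continuous_const)
    filter_upwards [hV.mem_nhds (show q.1 ∈ {s : ℝ | (s, q.2) ∈ U} from hq)] with s hs
    exact pdx_mul (hdf _ hs) (hdg _ hs)
  have H1 : HasDerivAt (fun s => pdx f (s, q.2)) (pdx (pdx f) q) q.1 := hasDeriv_slice_x hpf
  have H2 : HasDerivAt (fun s => g (s, q.2)) (pdx g q) q.1 := hasDeriv_slice_x (hdg q hq)
  have H3 : HasDerivAt (fun s => f (s, q.2)) (pdx f q) q.1 := hasDeriv_slice_x (hdf q hq)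
  have H4 : HasDerivAt (fun s => pdx g (s, q.2)) (pdx (pdx g) q) q.1 := hasDeriv_slice_x hpg
  calc pdx (pdx (fun q => f q * g q)) q
      = deriv (fun s => pdx f (s, q.2) * g (s, q.2) + f (s, q.2) * pdx g (s, q.2)) q.1 :=
        hev.deriv_eq
    _ = _ := by rw [((H1.fun_mul H2).fun_add (H3.fun_mul H4)).deriv]; ring

lemma pdy2_mul (hU : IsOpen U) (hf : ContDiffOn ℝ 2 f U) (hg : ContDiffOn ℝ 2 g U)
    (hq : q ∈ U) :
    pdy (pdy (fun q => f q * g q)) q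
      = pdy (pdy f) q * g q + 2 * (pdy f q * pdy g q) + f q * pdy (pdy g) q := by
  have hdf : ∀ r ∈ U, DifferentiableAt ℝ f r := fun r hr => diffAt_of_C2 hU hf hr
  have hdg : ∀ r ∈ U, DifferentiableAt ℝ g r := fun r hr => diffAt_of_C2 hU hg hr
  have hpf : DifferentiableAt ℝ (pdy f) q :=
    ((pdy_contDiffOn hU hf).contDiffAt (hU.mem_nhds hq)).differentiableAt one_ne_zero
  have hpg : DifferentiableAt ℝ (pdy g) q :=
    ((pdy_contDiffOn hU hg).contDiffAt (hU.mem_nhds hq)).differentiableAt one_ne_zero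
  have hev : (fun s => pdy (fun q => f q * g q) (q.1, s))
      =ᶠ[nhds q.2] fun s => pdy f (q.1, s) * g (q.1, s) + f (q.1, s) * pdy g (q.1, s) := by
    have hV : IsOpen {s : ℝ | (q.1, s) ∈ U} :=
      hU.preimage (continuous_const.prodMk continuous_id)
    filter_upwards [hV.mem_nhds (show q.2 ∈ {s : ℝ | (q.1, s) ∈ U} from hq)] with s hs
    exact pdy_mul (hdf _ hs) (hdg _ hs)
  have H1 : HasDerivAt (fun s => pdy f (q.1, s)) (pdy (pdy f) q) q.2 := hasDeriv_slice_y hpf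
  have H2 : HasDerivAt (fun s => g (q.1, s)) (pdy g q) q.2 := hasDeriv_slice_y (hdg q hq)
  have H3 : HasDerivAt (fun s => f (q.1, s)) (pdy f q) q.2 := hasDeriv_slice_y (hdf q hq)
  have H4 : HasDerivAt (fun s => pdy g (q.1, s)) (pdy (pdy g) q) q.2 := hasDeriv_slice_y hpg
  calc pdy (pdy (fun q => f q * g q)) q
      = deriv (fun s => pdy f (q.1, s) * g (q.1, s) + f (q.1, s) * pdy g (q.1, s)) q.2 :=
        hev.deriv_eq
    _ = _ := by rw [((H1.fun_mul H2).fun_add (H3.fun_mul H4)).deriv]; ring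

lemma pdx2_sub (hU : IsOpen U) (hf : ContDiffOn ℝ 2 f U) (hg : ContDiffOn ℝ 2 g U)
    (hq : q ∈ U) :
    pdx (pdx (fun q => f q - g q)) q = pdx (pdx f) q - pdx (pdx g) q := by
  have hpf : DifferentiableAt ℝ (pdx f) q :=
    ((pdx_contDiffOn hU hf).contDiffAt (hU.mem_nhds hq)).differentiableAt one_ne_zero
  have hpg : DifferentiableAt ℝ (pdx g) q :=
    ((pdx_contDiffOn hU hg).contDiffAt (hU.mem_nhds hq)).differentiableAt one_ne_zero
  have hev : (fun s => pdx (fun q => f q - g q) (s, q.2))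
      =ᶠ[nhds q.1] fun s => pdx f (s, q.2) - pdx g (s, q.2) := by
    have hV : IsOpen {s : ℝ | (s, q.2) ∈ U} :=
      hU.preimage (continuous_id.prodMk continuous_const)
    filter_upwards [hV.mem_nhds (show q.1 ∈ {s : ℝ | (s, q.2) ∈ U} from hq)] with s hs
    exact pdx_sub (diffAt_of_C2 hU hf hs) (diffAt_of_C2 hU hg hs)
  calc pdx (pdx (fun q => f q - g q)) q
      = deriv (fun s => pdx f (s, q.2) - pdx g (s, q.2)) q.1 := hev.deriv_eq
    _ = _ := ((hasDeriv_slice_x hpf).sub (hasDeriv_slice_x hpg)).deriv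

lemma pdy2_sub (hU : IsOpen U) (hf : ContDiffOn ℝ 2 f U) (hg : ContDiffOn ℝ 2 g U)
    (hq : q ∈ U) :
    pdy (pdy (fun q => f q - g q)) q = pdy (pdy f) q - pdy (pdy g) q := by
  have hpf : DifferentiableAt ℝ (pdy f) q :=
    ((pdy_contDiffOn hU hf).contDiffAt (hU.mem_nhds hq)).differentiableAt one_ne_zero
  have hpg : DifferentiableAt ℝ (pdy g) q :=
    ((pdy_contDiffOn hU hg).contDiffAt (hU.mem_nhds hq)).differentiableAt one_ne_zero
  have hev : (fun s => pdy (fun q => f q - g q) (q.1, s))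
      =ᶠ[nhds q.2] fun s => pdy f (q.1, s) - pdy g (q.1, s) := by
    have hV : IsOpen {s : ℝ | (q.1, s) ∈ U} :=
      hU.preimage (continuous_const.prodMk continuous_id)
    filter_upwards [hV.mem_nhds (show q.2 ∈ {s : ℝ | (q.1, s) ∈ U} from hq)] with s hs
    exact pdy_sub (diffAt_of_C2 hU hf hs) (diffAt_of_C2 hU hg hs)
  calc pdy (pdy (fun q => f q - g q)) q
      = deriv (fun s => pdy f (q.1, s) - pdy g (q.1, s)) q.2 := hev.deriv_eq
    _ = _ := ((hasDeriv_slice_y hpf).sub (hasDeriv_slice_y hpg)).deriv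

lemma lap_mul (hU : IsOpen U) (hf : ContDiffOn ℝ 2 f U) (hg : ContDiffOn ℝ 2 g U)
    (hq : q ∈ U) :
    lap (fun q => f q * g q) q
      = g q * lap f q + f q * lap g q
        + 2 * (pdx f q * pdx g q + pdy f q * pdy g q) := by
  unfold lap
  rw [pdx2_mul hU hf hg hq, pdy2_mul hU hf hg hq]; ring

lemma lap_sub (hU : IsOpen U) (hf : ContDiffOn ℝ 2 f U) (hg : ContDiffOn ℝ 2 g U)
    (hq : q ∈ U) :
    lap (fun q => f q - g q) q = lap f q - lap g q := by
  unfold lap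
  rw [pdx2_sub hU hf hg hq, pdy2_sub hU hf hg hq]; ring

end second

lemma lap_fst (q : ℝ × ℝ) : lap (fun w : ℝ × ℝ => w.1) q = 0 := by
  simp [lap, pdx, pdy]

lemma lap_snd (q : ℝ × ℝ) : lap (fun w : ℝ × ℝ => w.2) q = 0 := by
  simp [lap, pdx, pdy]

lemma lap_fst_mul_snd (q : ℝ × ℝ) : lap (fun w : ℝ × ℝ => w.1 * w.2) q = 0 := by
  have hx : ∀ r : ℝ × ℝ, pdx (fun w : ℝ × ℝ => w.1 * w.2) r = r.2 := by
    intro r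
    have : HasDerivAt (fun s : ℝ => s * r.2) r.2 r.1 := by
      simpa using (hasDerivAt_id r.1).mul_const r.2
    exact this.deriv
  have hy : ∀ r : ℝ × ℝ, pdy (fun w : ℝ × ℝ => w.1 * w.2) r = r.1 := by
    intro r
    have : HasDerivAt (fun s : ℝ => r.1 * s) r.1 r.2 := by
      simpa using (hasDerivAt_id r.2).const_mul r.1
    exact this.deriv
  have h1 : pdx (pdx fun w : ℝ × ℝ => w.1 * w.2) q = 0 := by
    have : (fun s => pdx (fun w : ℝ × ℝ => w.1 * w.2) (s, q.2)) = fun _ : ℝ => q.2 :=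
      funext fun s => hx (s, q.2)
    show deriv (fun s => pdx (fun w : ℝ × ℝ => w.1 * w.2) (s, q.2)) q.1 = 0
    rw [this]; simp
  have h2 : pdy (pdy fun w : ℝ × ℝ => w.1 * w.2) q = 0 := by
    have : (fun s => pdy (fun w : ℝ × ℝ => w.1 * w.2) (q.1, s)) = fun _ : ℝ => q.1 :=
      funext fun s => hy (q.1, s)
    show deriv (fun s => pdy (fun w : ℝ × ℝ => w.1 * w.2) (q.1, s)) q.2 = 0
    rw [this]; simp
  unfold lap; rw [h1, h2]; ring

lemma lap_sq_diff (q : ℝ × ℝ) :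
    lap (fun w : ℝ × ℝ => w.1 * w.1 - w.2 * w.2) q = 0 := by
  have hx : ∀ r : ℝ × ℝ, pdx (fun w : ℝ × ℝ => w.1 * w.1 - w.2 * w.2) r = 2 * r.1 := by
    intro r
    have : HasDerivAt (fun s : ℝ => s * s - r.2 * r.2) (2 * r.1) r.1 := by
      have := ((hasDerivAt_id r.1).fun_mul (hasDerivAt_id r.1)).fun_sub
        (hasDerivAt_const r.1 (r.2 * r.2))
      simpa [two_mul] using this
    exact this.deriv
  have hy : ∀ r : ℝ × ℝ, pdy (fun w : ℝ × ℝ => w.1 * w.1 - w.2 * w.2) r = -(2 * r.2) := by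
    intro r
    have : HasDerivAt (fun s : ℝ => r.1 * r.1 - s * s) (-(2 * r.2)) r.2 := by
      have := (hasDerivAt_const r.2 (r.1 * r.1)).fun_sub
        ((hasDerivAt_id r.2).fun_mul (hasDerivAt_id r.2))
      simpa [two_mul] using this
    exact this.deriv
  have h1 : pdx (pdx fun w : ℝ × ℝ => w.1 * w.1 - w.2 * w.2) q = 2 := by
    have : (fun s => pdx (fun w : ℝ × ℝ => w.1 * w.1 - w.2 * w.2) (s, q.2))
        = fun s : ℝ => 2 * s := funext fun s => hx (s, q.2)
    have h2 : HasDerivAt (fun s : ℝ => 2 * s) 2 q.1 := by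
      simpa using (hasDerivAt_id q.1).const_mul (2 : ℝ)
    show deriv (fun s => pdx (fun w : ℝ × ℝ => w.1 * w.1 - w.2 * w.2) (s, q.2)) q.1 = 2
    rw [this]; exact h2.deriv
  have h2 : pdy (pdy fun w : ℝ × ℝ => w.1 * w.1 - w.2 * w.2) q = -2 := by
    have : (fun s => pdy (fun w : ℝ × ℝ => w.1 * w.1 - w.2 * w.2) (q.1, s))
        = fun s : ℝ => -(2 * s) := funext fun s => hy (q.1, s)
    have h3 : HasDerivAt (fun s : ℝ => -(2 * s)) (-2) q.2 := by
      simpa using ((hasDerivAt_id q.2).const_mul (2 : ℝ)).fun_neg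
    show deriv (fun s => pdy (fun w : ℝ × ℝ => w.1 * w.1 - w.2 * w.2) (q.1, s)) q.2 = -2
    rw [this]; exact h3.deriv
  unfold lap; rw [h1, h2]; ring

lemma cr_algebra {a b c d : ℝ} (h1 : a * c + b * d = 0) (h2 : a ^ 2 + b ^ 2 = c ^ 2 + d ^ 2) :
    (a = d ∧ b = -c) ∨ (a = -d ∧ b = c) := by
  have key : ((a - d) ^ 2 + (b + c) ^ 2) * ((a + d) ^ 2 + (b - c) ^ 2) = 0 := by
    have hid : ((a - d) ^ 2 + (b + c) ^ 2) * ((a + d) ^ 2 + (b - c) ^ 2)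
        = (a ^ 2 + b ^ 2 - c ^ 2 - d ^ 2) ^ 2 + (2 * (a * c + b * d)) ^ 2 := by ring
    rw [hid, h1]
    have : a ^ 2 + b ^ 2 - c ^ 2 - d ^ 2 = 0 := by linarith
    rw [this]; ring
  rcases mul_eq_zero.mp key with h | h
  · left
    have ha : (a - d) ^ 2 = 0 := by nlinarith [sq_nonneg (b + c)]
    have hb : (b + c) ^ 2 = 0 := by nlinarith [sq_nonneg (a - d)]
    constructor
    · have := pow_eq_zero_iff (two_ne_zero) |>.mp ha; linarith
    · have := pow_eq_zero_iff (two_ne_zero) |>.mp hb; linarith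
  · right
    have ha : (a + d) ^ 2 = 0 := by nlinarith [sq_nonneg (b - c)]
    have hb : (b - c) ^ 2 = 0 := by nlinarith [sq_nonneg (a + d)]
    constructor
    · have := pow_eq_zero_iff (two_ne_zero) |>.mp ha; linarith
    · have := pow_eq_zero_iff (two_ne_zero) |>.mp hb; linarith

/-- if a C² diffeomorphism `F = (u,v)` on an open set `U` pulls back
harmonic functions to harmonic functions and conversely, then at every point of `U`
the components satisfy the Cauchy–Riemann or anti-Cauchy–Riemann equations. -/
theorem conformal_characterization_CR
    (U : Set (ℝ × ℝ)) (hU : IsOpen U)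
    (F : ℝ × ℝ → ℝ × ℝ)
    (hF : ContDiffOn ℝ 2 F U)
    (hInj : Set.InjOn F U)
    (hOpen : IsOpen (F '' U))
    (hInv : ∃ G : ℝ × ℝ → ℝ × ℝ, ContDiffOn ℝ 2 G (F '' U) ∧ ∀ p ∈ U, G (F p) = p)
    (hHarm : ∀ φ : ℝ × ℝ → ℝ, ContDiff ℝ 2 φ →
      ((∀ p ∈ U, lap (fun q => φ (F q)) p = 0) ↔ (∀ q ∈ F '' U, lap φ q = 0))) :
    ∀ p ∈ U,
      (pdx (fun q => (F q).1) p = pdy (fun q => (F q).2) p ∧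
        pdy (fun q => (F q).1) p = - pdx (fun q => (F q).2) p) ∨
      (pdx (fun q => (F q).1) p = - pdy (fun q => (F q).2) p ∧
        pdy (fun q => (F q).1) p = pdx (fun q => (F q).2) p) := by
  intro p hp
  have hu : ContDiffOn ℝ 2 (fun q => (F q).1) U := contDiff_fst.comp_contDiffOn hF
  have hv : ContDiffOn ℝ 2 (fun q => (F q).2) U := contDiff_snd.comp_contDiffOn hF
  have lapu : ∀ r ∈ U, lap (fun q => (F q).1) r = 0 :=
    (hHarm (fun w => w.1) contDiff_fst).mpr (fun q _ => lap_fst q)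
  have lapv : ∀ r ∈ U, lap (fun q => (F q).2) r = 0 :=
    (hHarm (fun w => w.2) contDiff_snd).mpr (fun q _ => lap_snd q)
  have lapuv : lap (fun q => (F q).1 * (F q).2) p = 0 :=
    (hHarm (fun w => w.1 * w.2) (contDiff_fst.mul contDiff_snd)).mpr
      (fun q _ => lap_fst_mul_snd q) p hp
  have lapsq : lap (fun q => (F q).1 * (F q).1 - (F q).2 * (F q).2) p = 0 :=
    (hHarm (fun w => w.1 * w.1 - w.2 * w.2)
      ((contDiff_fst.mul contDiff_fst).sub (contDiff_snd.mul contDiff_snd))).mpr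
      (fun q _ => lap_sq_diff q) p hp
  set a := pdx (fun q => (F q).1) p with ha
  set b := pdy (fun q => (F q).1) p with hb
  set c := pdx (fun q => (F q).2) p with hc
  set d := pdy (fun q => (F q).2) p with hd
  have eqA : lap (fun q => (F q).1 * (F q).2) p
      = (F p).2 * lap (fun q => (F q).1) p + (F p).1 * lap (fun q => (F q).2) p
        + 2 * (a * c + b * d) := lap_mul hU hu hv hp
  have eqB : lap (fun q => (F q).1 * (F q).1 - (F q).2 * (F q).2) p
      = lap (fun q => (F q).1 * (F q).1) p - lap (fun q => (F q).2 * (F q).2) p :=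
    lap_sub hU (hu.mul hu) (hv.mul hv) hp
  have eqC : lap (fun q => (F q).1 * (F q).1) p
      = (F p).1 * lap (fun q => (F q).1) p + (F p).1 * lap (fun q => (F q).1) p
        + 2 * (a * a + b * b) := lap_mul hU hu hu hp
  have eqD : lap (fun q => (F q).2 * (F q).2) p
      = (F p).2 * lap (fun q => (F q).2) p + (F p).2 * lap (fun q => (F q).2) p
        + 2 * (c * c + d * d) := lap_mul hU hv hv hp
  rw [lapu p hp, lapv p hp, lapuv] at eqA
  rw [lapu p hp] at eqC
  rw [lapv p hp] at eqD
  rw [lapsq, eqC, eqD] at eqB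
  have horth : a * c + b * d = 0 := by linarith
  have hnorm : a ^ 2 + b ^ 2 = c ^ 2 + d ^ 2 := by nlinarith [eqB]
  exact cr_algebra horth hnorm
end

section
/- Let F : U → ℝ² be a C² conformal map on an open connected subset U of ℝ² (i.e., the derivative DF(p) at each point is a nonzero scalar multiple of an orthogonal linear map). Then F, viewed as a function of the complex variable z = x + iy, is holomorphic on U or anti-holomorphic on U. -/
open Complex

lemma real_clm_apply_eq (g : ℂ →L[ℝ] ℂ) (z : ℂ) :
    g z = z.re • g 1 + z.im • g I := by
  have : z = z.re • (1 : ℂ) + z.im • I := by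
    simp [Complex.real_smul, Complex.re_add_im]
  conv_lhs => rw [this]
  rw [map_add, map_smul, map_smul]

lemma clm_complexify (g : ℂ →L[ℝ] ℂ) (h : g I = I * g 1) :
    ∃ map : ℂ →L[ℂ] ℂ, map.restrictScalars ℝ = g := by
  refine ⟨g 1 • ContinuousLinearMap.id ℂ ℂ, ?_⟩
  ext z
  have hz := real_clm_apply_eq g z
  rw [h] at hz
  simp only [ContinuousLinearMap.coe_restrictScalars', ContinuousLinearMap.smul_apply,
    ContinuousLinearMap.id_apply, smul_eq_mul, hz, Complex.real_smul]
  linear_combination (-(g 1)) * Complex.re_add_im z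

/-- a C² conformal map on an open connected subset of the plane,
viewed as a complex function, is holomorphic or anti-holomorphic on `U`. -/
theorem conformal_holomorphic_or_antiholomorphic
    (U : Set ℂ) (hU : IsOpen U) (hconn : IsConnected U)
    (F : ℂ → ℂ)
    (hF : ContDiffOn ℝ 2 F U)
    (hconf : ∀ p ∈ U, IsConformalMap (fderiv ℝ F p)) :
    DifferentiableOn ℂ F U ∨
      DifferentiableOn ℂ (fun z => (starRingEnd ℂ) (F z)) U := by
  have hdiff : ∀ p ∈ U, DifferentiableAt ℝ F p := fun p hp =>
    (hF.contDiffAt (hU.mem_nhds hp)).differentiableAt (by norm_num)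
  have hcont : ContinuousOn (fderiv ℝ F) U :=
    hF.continuousOn_fderiv_of_isOpen hU (by norm_num)
  -- the "holomorphic" and "antiholomorphic" defect functions
  set h : ℂ → ℂ := fun p => fderiv ℝ F p I - I * fderiv ℝ F p 1 with hh
  set k : ℂ → ℂ := fun p => fderiv ℝ F p I + I * fderiv ℝ F p 1 with hk
  have hcont1 : ContinuousOn (fun p => fderiv ℝ F p 1) U :=
    (ContinuousLinearMap.apply ℝ ℂ (1 : ℂ)).continuous.comp_continuousOn hcont
  have hcontI : ContinuousOn (fun p => fderiv ℝ F p I) U :=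
    (ContinuousLinearMap.apply ℝ ℂ I).continuous.comp_continuousOn hcont
  have hconth : ContinuousOn h U := hcontI.sub (continuousOn_const.mul hcont1)
  have hcontk : ContinuousOn k U := hcontI.add (continuousOn_const.mul hcont1)
  set A : Set ℂ := {p ∈ U | h p = 0} with hA
  set B : Set ℂ := {p ∈ U | k p = 0} with hB
  -- cover
  have cover : U ⊆ A ∪ B := by
    intro p hp
    rcases (hconf p hp).is_complex_or_conj_linear with ⟨map, hmap⟩ | ⟨map, hmap⟩
    · left
      refine ⟨hp, ?_⟩
      have h1 : fderiv ℝ F p 1 = map 1 := by rw [← hmap]; rfl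
      have hI : fderiv ℝ F p I = map I := by rw [← hmap]; rfl
      have : map I = I * map 1 := by
        have : map I = map (I • 1) := by norm_num
        rw [this, map_smul, smul_eq_mul]
      simp [hh, h1, hI, this]
    · right
      refine ⟨hp, ?_⟩
      have h1 : map 1 = fderiv ℝ F p 1 := by
        have := congrArg (fun (g : ℂ →L[ℝ] ℂ) => g 1) hmap
        simpa using this
      have hI : map I = -fderiv ℝ F p I := by
        have := congrArg (fun (g : ℂ →L[ℝ] ℂ) => g I) hmap
        simpa using this
      have hlin : map I = I * map 1 := by
        have : map I = map (I • 1) := by norm_num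
        rw [this, map_smul, smul_eq_mul]
      rw [hI, h1] at hlin
      simp [hk]
      linear_combination -hlin
  -- disjointness
  have disj : Disjoint A B := by
    rw [Set.disjoint_left]
    rintro p ⟨hp, hpA⟩ ⟨-, hpB⟩
    have h1 : fderiv ℝ F p 1 = 0 := by
      have : (2 : ℂ) * (I * fderiv ℝ F p 1) = 0 := by
        simp only [hh] at hpA
        simp only [hk] at hpB
        linear_combination hpB - hpA
      simpa [I_ne_zero] using this
    have hI : fderiv ℝ F p I = 0 := by
      simp only [hh, h1] at hpA
      linear_combination hpA
    have : fderiv ℝ F p = 0 := by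
      ext z
      rw [real_clm_apply_eq, h1, hI]
      simp
    exact (hconf p hp).ne_zero this
  -- openness
  have openA : IsOpen A := by
    have : A = U ∩ k ⁻¹' {0}ᶜ := by
      ext p
      constructor
      · rintro ⟨hp, hph⟩
        refine ⟨hp, fun hpk => ?_⟩
        exact disj.ne_of_mem ⟨hp, hph⟩ ⟨hp, hpk⟩ rfl
      · rintro ⟨hp, hpk⟩
        rcases cover hp with hpA | hpB
        · exact hpA
        · exact absurd hpB.2 hpk
    rw [this]
    exact hcontk.isOpen_inter_preimage hU isOpen_compl_singleton
  have openB : IsOpen B := by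
    have : B = U ∩ h ⁻¹' {0}ᶜ := by
      ext p
      constructor
      · rintro ⟨hp, hpk⟩
        refine ⟨hp, fun hph => ?_⟩
        exact disj.ne_of_mem ⟨hp, hph⟩ ⟨hp, hpk⟩ rfl
      · rintro ⟨hp, hph⟩
        rcases cover hp with hpA | hpB
        · exact absurd hpA.2 hph
        · exact hpB
    rw [this]
    exact hconth.isOpen_inter_preimage hU isOpen_compl_singleton
  obtain ⟨p₀, hp₀⟩ := hconn.nonempty
  rcases cover hp₀ with hp₀A | hp₀B
  · -- everywhere holomorphic
    left
    have hUA : U ⊆ A :=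
      hconn.isPreconnected.subset_left_of_subset_union openA openB disj cover ⟨p₀, hp₀, hp₀A⟩
    intro p hp
    have hph : h p = 0 := (hUA hp).2
    have : DifferentiableAt ℂ F p := by
      rw [differentiableAt_iff_restrictScalars ℝ (hdiff p hp)]
      apply clm_complexify
      simp only [hh] at hph
      linear_combination hph
    exact this.differentiableWithinAt
  · -- everywhere antiholomorphic
    right
    have hUB : U ⊆ B :=
      (hconn.isPreconnected.subset_left_of_subset_union openB openA disj.symm
        (by rwa [Set.union_comm]) ⟨p₀, hp₀, hp₀B⟩)
    intro p hp
    have hpk : k p = 0 := (hUB hp).2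
    have hG : DifferentiableAt ℝ (fun z => (starRingEnd ℂ) (F z)) p :=
      conjCLE.differentiableAt.comp p (hdiff p hp)
    have hGfd : fderiv ℝ (fun z => (starRingEnd ℂ) (F z)) p =
        (conjCLE : ℂ →L[ℝ] ℂ).comp (fderiv ℝ F p) := by
      have := conjCLE.comp_fderiv (f := F) (x := p)
      exact this
    have : DifferentiableAt ℂ (fun z => (starRingEnd ℂ) (F z)) p := by
      rw [differentiableAt_iff_restrictScalars ℝ hG]
      apply clm_complexify
      rw [hGfd]
      simp only [ContinuousLinearMap.coe_comp', Function.comp_apply,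
        ContinuousLinearEquiv.coe_coe, conjCLE_apply]
      have : fderiv ℝ F p I = -I * fderiv ℝ F p 1 := by
        simp only [hk] at hpk
        linear_combination hpk
      rw [this]
      rw [map_mul]
      simp
    exact this.differentiableWithinAt
end

section
/- Let η denote the Minkowski bilinear form η((x₁,t₁),(x₂,t₂)) = x₁x₂ - t₁t₂ on ℝ². Let F : U → ℝ² be a C² diffeomorphism on an open subset U of ℝ², with components (X,T), such that the pullback of η under F equals λ·η for a positive function λ on U (i.e., F is a Minkowski-conformal transformation). Then both X and T satisfy the wave equation: X_xx - X_tt = 0 and T_xx - T_tt = 0 on U. -/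
/-- The Minkowski bilinear form η((x₁,t₁),(x₂,t₂)) = x₁x₂ - t₁t₂ on ℝ². -/
def minkEta (a b : ℝ × ℝ) : ℝ := a.1 * b.1 - a.2 * b.2

/-- Partial derivative in the second coordinate (t). -/
noncomputable def pdt (φ : ℝ × ℝ → ℝ) (p : ℝ × ℝ) : ℝ :=
  deriv (fun s => φ (p.1, s)) p.2

/-- The d'Alembertian ∂²/∂x² - ∂²/∂t². -/
noncomputable def dAlembert (φ : ℝ × ℝ → ℝ) (p : ℝ × ℝ) : ℝ :=
  pdx (pdx φ) p - pdt (pdt φ) p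

open Filter Topology

/- helper: the two coordinate lines -/
lemma lineX_hasDerivAt (q : ℝ × ℝ) :
    HasDerivAt (fun s : ℝ => ((s, q.2) : ℝ × ℝ)) ((1:ℝ), (0:ℝ)) q.1 :=
  (hasDerivAt_id q.1).prodMk (hasDerivAt_const q.1 q.2)

lemma lineT_hasDerivAt (q : ℝ × ℝ) :
    HasDerivAt (fun s : ℝ => ((q.1, s) : ℝ × ℝ)) ((0:ℝ), (1:ℝ)) q.2 :=
  (hasDerivAt_const q.2 q.1).prodMk (hasDerivAt_id q.2)

lemma pdx_eq {φ : ℝ × ℝ → ℝ} {q : ℝ × ℝ} (h : DifferentiableAt ℝ φ q) :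
    pdx φ q = fderiv ℝ φ q ((1:ℝ), (0:ℝ)) := by
  have hc := h.hasFDerivAt.comp_hasDerivAt q.1 (lineX_hasDerivAt q)
  exact hc.deriv

lemma pdt_eq {φ : ℝ × ℝ → ℝ} {q : ℝ × ℝ} (h : DifferentiableAt ℝ φ q) :
    pdt φ q = fderiv ℝ φ q ((0:ℝ), (1:ℝ)) := by
  have hc := h.hasFDerivAt.comp_hasDerivAt q.2 (lineT_hasDerivAt q)
  exact hc.deriv

lemma dline (φ : ℝ × ℝ → ℝ) {U : Set (ℝ × ℝ)} (hU : IsOpen U)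
    (hφ : ContDiffOn ℝ 2 φ U) {p : ℝ × ℝ} (hp : p ∈ U) (v : ℝ × ℝ) :
    HasDerivAt (fun s => fderiv ℝ φ (s, p.2) v)
      (fderiv ℝ (fderiv ℝ φ) p ((1:ℝ),(0:ℝ)) v) p.1 ∧
    HasDerivAt (fun s => fderiv ℝ φ (p.1, s) v)
      (fderiv ℝ (fderiv ℝ φ) p ((0:ℝ),(1:ℝ)) v) p.2 := by
  have h1 : ContDiffOn ℝ 1 (fderiv ℝ φ) U := hφ.fderiv_of_isOpen hU (by norm_num)
  have hdf : HasFDerivAt (fderiv ℝ φ) (fderiv ℝ (fderiv ℝ φ) p) p :=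
    ((h1.differentiableOn one_ne_zero).differentiableAt (hU.mem_nhds hp)).hasFDerivAt
  have happ : HasFDerivAt (fun q => fderiv ℝ φ q v)
      ((fderiv ℝ (fderiv ℝ φ) p).flip v) p := by
    simpa using hdf.clm_apply (hasFDerivAt_const v p)
  constructor
  · exact happ.comp_hasDerivAt p.1 (lineX_hasDerivAt p)
  · exact happ.comp_hasDerivAt p.2 (lineT_hasDerivAt p)

lemma diffAt_of_cd {φ : ℝ × ℝ → ℝ} {U : Set (ℝ × ℝ)} (hU : IsOpen U)
    (hφ : ContDiffOn ℝ 2 φ U) {q : ℝ × ℝ} (hq : q ∈ U) : DifferentiableAt ℝ φ q :=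
  (hφ.differentiableOn (by norm_num)).differentiableAt (hU.mem_nhds hq)

lemma dAlembert_eq {φ : ℝ × ℝ → ℝ} {U : Set (ℝ × ℝ)} (hU : IsOpen U)
    (hφ : ContDiffOn ℝ 2 φ U) {p : ℝ × ℝ} (hp : p ∈ U) :
    dAlembert φ p = fderiv ℝ (fderiv ℝ φ) p ((1:ℝ),(0:ℝ)) ((1:ℝ),(0:ℝ))
      - fderiv ℝ (fderiv ℝ φ) p ((0:ℝ),(1:ℝ)) ((0:ℝ),(1:ℝ)) := by
  have hnx : ∀ᶠ s in 𝓝 p.1, ((s, p.2) : ℝ × ℝ) ∈ U := by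
    have hc : ContinuousAt (fun s : ℝ => ((s, p.2) : ℝ × ℝ)) p.1 :=
      (lineX_hasDerivAt p).continuousAt
    exact hc.preimage_mem_nhds (hU.mem_nhds hp)
  have hnt : ∀ᶠ s in 𝓝 p.2, ((p.1, s) : ℝ × ℝ) ∈ U := by
    have hc : ContinuousAt (fun s : ℝ => ((p.1, s) : ℝ × ℝ)) p.2 :=
      (lineT_hasDerivAt p).continuousAt
    exact hc.preimage_mem_nhds (hU.mem_nhds hp)
  have h1 : pdx (pdx φ) p = fderiv ℝ (fderiv ℝ φ) p ((1:ℝ),(0:ℝ)) ((1:ℝ),(0:ℝ)) := by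
    have hee : (fun s => pdx φ (s, p.2)) =ᶠ[𝓝 p.1]
        (fun s => fderiv ℝ φ (s, p.2) ((1:ℝ),(0:ℝ))) := by
      filter_upwards [hnx] with s hs
      exact pdx_eq (diffAt_of_cd hU hφ hs)
    calc pdx (pdx φ) p = deriv (fun s => pdx φ (s, p.2)) p.1 := rfl
      _ = deriv (fun s => fderiv ℝ φ (s, p.2) ((1:ℝ),(0:ℝ))) p.1 := hee.deriv_eq
      _ = _ := (dline φ hU hφ hp ((1:ℝ),(0:ℝ))).1.deriv
  have h2 : pdt (pdt φ) p = fderiv ℝ (fderiv ℝ φ) p ((0:ℝ),(1:ℝ)) ((0:ℝ),(1:ℝ)) := by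
    have hee : (fun s => pdt φ (p.1, s)) =ᶠ[𝓝 p.2]
        (fun s => fderiv ℝ φ (p.1, s) ((0:ℝ),(1:ℝ))) := by
      filter_upwards [hnt] with s hs
      exact pdt_eq (diffAt_of_cd hU hφ hs)
    calc pdt (pdt φ) p = deriv (fun s => pdt φ (p.1, s)) p.2 := rfl
      _ = deriv (fun s => fderiv ℝ φ (p.1, s) ((0:ℝ),(1:ℝ))) p.2 := hee.deriv_eq
      _ = _ := (dline φ hU hφ hp ((0:ℝ),(1:ℝ))).2.deriv
  rw [dAlembert, h1, h2]

lemma alg_key (a b c d P Q lam : ℝ) (hl : 0 < lam)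
    (h1 : a * a - c * c = lam) (h3 : b * b - d * d = -lam)
    (h4 : a * P = c * Q) (h5 : b * P = d * Q) : P = 0 ∧ Q = 0 := by
  have e4 : (a * P) * (a * P) = (c * Q) * (c * Q) := by rw [h4]
  have e5 : (b * P) * (b * P) = (d * Q) * (d * Q) := by rw [h5]
  have hA : lam * P ^ 2 = c ^ 2 * (Q ^ 2 - P ^ 2) := by nlinarith [e4, h1]
  have hB : lam * Q ^ 2 = b ^ 2 * (P ^ 2 - Q ^ 2) := by nlinarith [e5, h3]
  rcases le_total (P ^ 2) (Q ^ 2) with h | h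
  · have hQ2 : Q ^ 2 = 0 := by nlinarith [sq_nonneg b, sq_nonneg Q]
    have hQ : Q = 0 := by
      have := sq_eq_zero_iff.mp hQ2; exact this
    have hP2 : P ^ 2 = 0 := by nlinarith [sq_nonneg P, sq_nonneg c]
    exact ⟨sq_eq_zero_iff.mp hP2, hQ⟩
  · have hP2 : P ^ 2 = 0 := by nlinarith [sq_nonneg c, sq_nonneg P]
    have hP : P = 0 := sq_eq_zero_iff.mp hP2
    have hQ2 : Q ^ 2 = 0 := by nlinarith [sq_nonneg Q, sq_nonneg b]
    exact ⟨hP, sq_eq_zero_iff.mp hQ2⟩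


/-- a Minkowski-conformal C² diffeomorphism `F = (X,T)` has
components satisfying the wave equation on `U`. -/
theorem minkowski_conformal_components_wave
    (U : Set (ℝ × ℝ)) (hU : IsOpen U)
    (F : ℝ × ℝ → ℝ × ℝ)
    (hF : ContDiffOn ℝ 2 F U)
    (hInj : Set.InjOn F U)
    (hOpen : IsOpen (F '' U))
    (hInv : ∃ G : ℝ × ℝ → ℝ × ℝ, ContDiffOn ℝ 2 G (F '' U) ∧ ∀ p ∈ U, G (F p) = p)
    (lam : ℝ × ℝ → ℝ) (hlam : ∀ p ∈ U, 0 < lam p)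
    (hconf : ∀ p ∈ U, ∀ w₁ w₂ : ℝ × ℝ,
      minkEta (fderiv ℝ F p w₁) (fderiv ℝ F p w₂) = lam p * minkEta w₁ w₂) :
    ∀ p ∈ U, dAlembert (fun q => (F q).1) p = 0 ∧ dAlembert (fun q => (F q).2) p = 0 := by
  intro p hp
  set X : ℝ × ℝ → ℝ := fun q => (F q).1 with hXdef
  set T : ℝ × ℝ → ℝ := fun q => (F q).2 with hTdef
  have hXc : ContDiffOn ℝ 2 X U := contDiff_fst.comp_contDiffOn hF
  have hTc : ContDiffOn ℝ 2 T U := contDiff_snd.comp_contDiffOn hF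
  -- split fderiv F into components
  have hsplit : ∀ q ∈ U, ∀ w : ℝ × ℝ,
      fderiv ℝ F q w = (fderiv ℝ X q w, fderiv ℝ T q w) := by
    intro q hq w
    have hx := (diffAt_of_cd hU hXc hq).hasFDerivAt
    have ht := (diffAt_of_cd hU hTc hq).hasFDerivAt
    have hprod : HasFDerivAt F ((fderiv ℝ X q).prod (fderiv ℝ T q)) q := hx.prodMk ht
    rw [hprod.fderiv]
    rfl
  -- abbreviations for first partials
  set A : ℝ × ℝ → ℝ := fun q => fderiv ℝ X q ((1:ℝ),(0:ℝ)) with hAdef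
  set B : ℝ × ℝ → ℝ := fun q => fderiv ℝ X q ((0:ℝ),(1:ℝ)) with hBdef
  set C : ℝ × ℝ → ℝ := fun q => fderiv ℝ T q ((1:ℝ),(0:ℝ)) with hCdef
  set D : ℝ × ℝ → ℝ := fun q => fderiv ℝ T q ((0:ℝ),(1:ℝ)) with hDdef
  -- the conformality identities, componentwise
  have e1 : ∀ q ∈ U, A q * A q + B q * B q - (C q * C q + D q * D q) = 0 := by
    intro q hq
    have h1 := hconf q hq ((1:ℝ),(0:ℝ)) ((1:ℝ),(0:ℝ))
    have h2 := hconf q hq ((0:ℝ),(1:ℝ)) ((0:ℝ),(1:ℝ))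
    rw [hsplit q hq] at h1 h2
    simp only [minkEta] at h1 h2
    norm_num at h1 h2
    simp only [hAdef, hBdef, hCdef, hDdef]
    linarith
  have e2 : ∀ q ∈ U, A q * B q - C q * D q = 0 := by
    intro q hq
    have h1 := hconf q hq ((1:ℝ),(0:ℝ)) ((0:ℝ),(1:ℝ))
    rw [hsplit q hq, hsplit q hq] at h1
    simp only [minkEta] at h1
    norm_num at h1
    simp only [hAdef, hBdef, hCdef, hDdef]
    linarith
  have hP1 : A p * A p - C p * C p = lam p := by
    have h1 := hconf p hp ((1:ℝ),(0:ℝ)) ((1:ℝ),(0:ℝ))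
    rw [hsplit p hp] at h1
    simp only [minkEta] at h1
    norm_num at h1
    simp only [hAdef, hCdef]
    linarith
  have hP3 : B p * B p - D p * D p = -lam p := by
    have h2 := hconf p hp ((0:ℝ),(1:ℝ)) ((0:ℝ),(1:ℝ))
    rw [hsplit p hp] at h2
    simp only [minkEta] at h2
    norm_num at h2
    simp only [hBdef, hDdef]
    linarith
  -- second partials
  set axx := fderiv ℝ (fderiv ℝ X) p ((1:ℝ),(0:ℝ)) ((1:ℝ),(0:ℝ)) with haxx
  set axt := fderiv ℝ (fderiv ℝ X) p ((1:ℝ),(0:ℝ)) ((0:ℝ),(1:ℝ)) with haxt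
  set atx := fderiv ℝ (fderiv ℝ X) p ((0:ℝ),(1:ℝ)) ((1:ℝ),(0:ℝ)) with hatx
  set att := fderiv ℝ (fderiv ℝ X) p ((0:ℝ),(1:ℝ)) ((0:ℝ),(1:ℝ)) with hatt
  set cxx := fderiv ℝ (fderiv ℝ T) p ((1:ℝ),(0:ℝ)) ((1:ℝ),(0:ℝ)) with hcxx
  set cxt := fderiv ℝ (fderiv ℝ T) p ((1:ℝ),(0:ℝ)) ((0:ℝ),(1:ℝ)) with hcxt
  set ctx := fderiv ℝ (fderiv ℝ T) p ((0:ℝ),(1:ℝ)) ((1:ℝ),(0:ℝ)) with hctx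
  set ctt := fderiv ℝ (fderiv ℝ T) p ((0:ℝ),(1:ℝ)) ((0:ℝ),(1:ℝ)) with hctt
  -- symmetry of second derivatives
  have hsymX : atx = axt :=
    (hXc.contDiffAt (hU.mem_nhds hp)).isSymmSndFDerivAt (by simp) _ _
  have hsymT : ctx = cxt :=
    (hTc.contDiffAt (hU.mem_nhds hp)).isSymmSndFDerivAt (by simp) _ _
  -- directional derivatives of the partials
  have hAx : HasDerivAt (fun s => A (s, p.2)) axx p.1 := (dline X hU hXc hp _).1
  have hBx : HasDerivAt (fun s => B (s, p.2)) axt p.1 := (dline X hU hXc hp _).1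
  have hCx : HasDerivAt (fun s => C (s, p.2)) cxx p.1 := (dline T hU hTc hp _).1
  have hDx : HasDerivAt (fun s => D (s, p.2)) cxt p.1 := (dline T hU hTc hp _).1
  have hAt : HasDerivAt (fun s => A (p.1, s)) atx p.2 := (dline X hU hXc hp _).2
  have hBt : HasDerivAt (fun s => B (p.1, s)) att p.2 := (dline X hU hXc hp _).2
  have hCt : HasDerivAt (fun s => C (p.1, s)) ctx p.2 := (dline T hU hTc hp _).2
  have hDt : HasDerivAt (fun s => D (p.1, s)) ctt p.2 := (dline T hU hTc hp _).2
  have hnx : ∀ᶠ s in 𝓝 p.1, ((s, p.2) : ℝ × ℝ) ∈ U :=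
    (lineX_hasDerivAt p).continuousAt.preimage_mem_nhds (hU.mem_nhds hp)
  have hnt : ∀ᶠ s in 𝓝 p.2, ((p.1, s) : ℝ × ℝ) ∈ U :=
    (lineT_hasDerivAt p).continuousAt.preimage_mem_nhds (hU.mem_nhds hp)
  -- differentiate identity e1 along the x-line
  have eqA : axx * A (p.1, p.2) + A (p.1, p.2) * axx +
      (axt * B (p.1, p.2) + B (p.1, p.2) * axt) -
      (cxx * C (p.1, p.2) + C (p.1, p.2) * cxx +
      (cxt * D (p.1, p.2) + D (p.1, p.2) * cxt)) = 0 := by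
    have hbig : HasDerivAt (fun s => A (s, p.2) * A (s, p.2) + B (s, p.2) * B (s, p.2)
        - (C (s, p.2) * C (s, p.2) + D (s, p.2) * D (s, p.2))) _ p.1 :=
      ((hAx.mul hAx).add (hBx.mul hBx)).sub ((hCx.mul hCx).add (hDx.mul hDx))
    have hzero : HasDerivAt (fun s => A (s, p.2) * A (s, p.2) + B (s, p.2) * B (s, p.2)
        - (C (s, p.2) * C (s, p.2) + D (s, p.2) * D (s, p.2))) 0 p.1 := by
      refine (hasDerivAt_const p.1 (0:ℝ)).congr_of_eventuallyEq ?_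
      filter_upwards [hnx] with s hs
      exact e1 (s, p.2) hs
    have := hbig.unique hzero
    linarith [this]
  -- differentiate identity e1 along the t-line
  have eqB : atx * A (p.1, p.2) + A (p.1, p.2) * atx +
      (att * B (p.1, p.2) + B (p.1, p.2) * att) -
      (ctx * C (p.1, p.2) + C (p.1, p.2) * ctx +
      (ctt * D (p.1, p.2) + D (p.1, p.2) * ctt)) = 0 := by
    have hbig : HasDerivAt (fun s => A (p.1, s) * A (p.1, s) + B (p.1, s) * B (p.1, s)
        - (C (p.1, s) * C (p.1, s) + D (p.1, s) * D (p.1, s))) _ p.2 :=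
      ((hAt.mul hAt).add (hBt.mul hBt)).sub ((hCt.mul hCt).add (hDt.mul hDt))
    have hzero : HasDerivAt (fun s => A (p.1, s) * A (p.1, s) + B (p.1, s) * B (p.1, s)
        - (C (p.1, s) * C (p.1, s) + D (p.1, s) * D (p.1, s))) 0 p.2 := by
      refine (hasDerivAt_const p.2 (0:ℝ)).congr_of_eventuallyEq ?_
      filter_upwards [hnt] with s hs
      exact e1 (p.1, s) hs
    have := hbig.unique hzero
    linarith [this]
  -- differentiate identity e2 along the x-line
  have eqC : axx * B (p.1, p.2) + A (p.1, p.2) * axt -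
      (cxx * D (p.1, p.2) + C (p.1, p.2) * cxt) = 0 := by
    have hbig : HasDerivAt (fun s => A (s, p.2) * B (s, p.2)
        - C (s, p.2) * D (s, p.2)) _ p.1 := (hAx.mul hBx).sub (hCx.mul hDx)
    have hzero : HasDerivAt (fun s => A (s, p.2) * B (s, p.2)
        - C (s, p.2) * D (s, p.2)) 0 p.1 := by
      refine (hasDerivAt_const p.1 (0:ℝ)).congr_of_eventuallyEq ?_
      filter_upwards [hnx] with s hs
      exact e2 (s, p.2) hs
    have := hbig.unique hzero
    linarith [this]
  -- differentiate identity e2 along the t-line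
  have eqD : atx * B (p.1, p.2) + A (p.1, p.2) * att -
      (ctx * D (p.1, p.2) + C (p.1, p.2) * ctt) = 0 := by
    have hbig : HasDerivAt (fun s => A (p.1, s) * B (p.1, s)
        - C (p.1, s) * D (p.1, s)) _ p.2 := (hAt.mul hBt).sub (hCt.mul hDt)
    have hzero : HasDerivAt (fun s => A (p.1, s) * B (p.1, s)
        - C (p.1, s) * D (p.1, s)) 0 p.2 := by
      refine (hasDerivAt_const p.2 (0:ℝ)).congr_of_eventuallyEq ?_
      filter_upwards [hnt] with s hs
      exact e2 (p.1, s) hs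
    have := hbig.unique hzero
    linarith [this]
  rw [hsymX] at eqB eqD
  rw [hsymT] at eqB eqD
  have hpe : ((p.1, p.2) : ℝ × ℝ) = p := rfl
  rw [hpe] at eqA eqB eqC eqD
  have h4 : A p * (axx - att) = C p * (cxx - ctt) := by linarith
  have h5 : B p * (axx - att) = D p * (cxx - ctt) := by linarith
  obtain ⟨hP, hQ⟩ := alg_key (A p) (B p) (C p) (D p) (axx - att) (cxx - ctt)
    (lam p) (hlam p hp) hP1 hP3 h4 h5
  constructor
  · rw [dAlembert_eq hU hXc hp]
    exact hP
  · rw [dAlembert_eq hU hTc hp]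
    exact hQ
end

section
/- Let F : U → ℝ²₁ be a C² diffeomorphism on an open subset U of the Minkowski plane with components (X,T), and suppose the pullback of the Minkowski form η = dx² - dt² under F is λ·η with λ > 0 pointwise. Write X = f(x+t) + g(x-t) and T = k(x+t) + h(x-t) (d'Alembert decompositions). Then at corresponding points: f'·g' > 0, k'·h' < 0, f'h' + g'k' = 0, and f'g' + k'h' = 0. -/
/-- for a Minkowski-conformal C² diffeomorphism F = (X,T) with
d'Alembert decompositions X = f(x+t) + g(x-t), T = k(x+t) + h(x-t), at the
corresponding points one has f'g' > 0, k'h' < 0, f'h' + g'k' = 0 and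
f'g' + k'h' = 0. -/
theorem conformal_null_derivative_relations
    (U : Set (ℝ × ℝ)) (hU : IsOpen U)
    (F : ℝ × ℝ → ℝ × ℝ)
    (hF : ContDiffOn ℝ 2 F U)
    (hInj : Set.InjOn F U)
    (hOpen : IsOpen (F '' U))
    (hInv : ∃ G : ℝ × ℝ → ℝ × ℝ, ContDiffOn ℝ 2 G (F '' U) ∧ ∀ p ∈ U, G (F p) = p)
    (lam : ℝ × ℝ → ℝ) (hlam : ∀ p ∈ U, 0 < lam p)
    (hconf : ∀ p ∈ U, ∀ w₁ w₂ : ℝ × ℝ,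
      minkEta (fderiv ℝ F p w₁) (fderiv ℝ F p w₂) = lam p * minkEta w₁ w₂)
    (f g k h : ℝ → ℝ)
    (hf : ContDiff ℝ 2 f) (hg : ContDiff ℝ 2 g)
    (hk : ContDiff ℝ 2 k) (hh : ContDiff ℝ 2 h)
    (hX : ∀ p ∈ U, (F p).1 = f (p.1 + p.2) + g (p.1 - p.2))
    (hT : ∀ p ∈ U, (F p).2 = k (p.1 + p.2) + h (p.1 - p.2)) :
    ∀ p ∈ U,
      0 < deriv f (p.1 + p.2) * deriv g (p.1 - p.2) ∧
      deriv k (p.1 + p.2) * deriv h (p.1 - p.2) < 0 ∧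
      deriv f (p.1 + p.2) * deriv h (p.1 - p.2)
        + deriv g (p.1 - p.2) * deriv k (p.1 + p.2) = 0 ∧
      deriv f (p.1 + p.2) * deriv g (p.1 - p.2)
        + deriv k (p.1 + p.2) * deriv h (p.1 - p.2) = 0 := by
  intro p hp
  set A := deriv f (p.1 + p.2) with hA
  set G := deriv g (p.1 - p.2) with hG
  set K := deriv k (p.1 + p.2) with hK
  set H := deriv h (p.1 - p.2) with hH
  set s : ℝ × ℝ →L[ℝ] ℝ :=
    ContinuousLinearMap.fst ℝ ℝ ℝ + ContinuousLinearMap.snd ℝ ℝ ℝ with hsdef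
  set d : ℝ × ℝ →L[ℝ] ℝ :=
    ContinuousLinearMap.fst ℝ ℝ ℝ - ContinuousLinearMap.snd ℝ ℝ ℝ with hddef
  have hs : HasFDerivAt (fun q : ℝ × ℝ => q.1 + q.2) s p :=
    (hasFDerivAt_fst).add (hasFDerivAt_snd)
  have hd : HasFDerivAt (fun q : ℝ × ℝ => q.1 - q.2) d p :=
    (hasFDerivAt_fst).sub (hasFDerivAt_snd)
  have hfa : HasDerivAt f A (p.1 + p.2) :=
    ((hf.differentiable two_ne_zero) (p.1 + p.2)).hasDerivAt
  have hga : HasDerivAt g G (p.1 - p.2) :=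
    ((hg.differentiable two_ne_zero) (p.1 - p.2)).hasDerivAt
  have hka : HasDerivAt k K (p.1 + p.2) :=
    ((hk.differentiable two_ne_zero) (p.1 + p.2)).hasDerivAt
  have hha : HasDerivAt h H (p.1 - p.2) :=
    ((hh.differentiable two_ne_zero) (p.1 - p.2)).hasDerivAt
  have hX1 : HasFDerivAt (fun q : ℝ × ℝ => f (q.1 + q.2) + g (q.1 - q.2))
      (A • s + G • d) p :=
    (hfa.comp_hasFDerivAt p hs).add (hga.comp_hasFDerivAt p hd)
  have hT1 : HasFDerivAt (fun q : ℝ × ℝ => k (q.1 + q.2) + h (q.1 - q.2))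
      (K • s + H • d) p :=
    (hka.comp_hasFDerivAt p hs).add (hha.comp_hasFDerivAt p hd)
  have hΦ : HasFDerivAt
      (fun q : ℝ × ℝ => (f (q.1 + q.2) + g (q.1 - q.2), k (q.1 + q.2) + h (q.1 - q.2)))
      ((A • s + G • d).prod (K • s + H • d)) p := HasFDerivAt.prodMk hX1 hT1
  have hEq : F =ᶠ[nhds p]
      fun q : ℝ × ℝ => (f (q.1 + q.2) + g (q.1 - q.2), k (q.1 + q.2) + h (q.1 - q.2)) := by
    filter_upwards [hU.mem_nhds hp] with q hq
    exact Prod.ext (hX q hq) (hT q hq)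
  have hFd : HasFDerivAt F ((A • s + G • d).prod (K • s + H • d)) p :=
    hΦ.congr_of_eventuallyEq hEq
  have hfd := hFd.fderiv
  have E1 := hconf p hp (1, 1) (1, 1)
  have E2 := hconf p hp (1, -1) (1, -1)
  have E3 := hconf p hp (1, 1) (1, -1)
  rw [hfd] at E1 E2 E3
  simp only [hsdef, hddef, minkEta, ContinuousLinearMap.prod_apply,
    ContinuousLinearMap.add_apply, ContinuousLinearMap.smul_apply,
    ContinuousLinearMap.sub_apply, ContinuousLinearMap.coe_fst',
    ContinuousLinearMap.coe_snd', smul_eq_mul, Prod.fst_one, Prod.snd_one] at E1 E2 E3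
  norm_num at E1 E2 E3
  clear_value A G K H s d
  clear hfd hFd hEq hΦ hT1 hX1 hha hka hga hfa hd hs hsdef hddef hA hG hK hH
  clear hF hInj hOpen hInv hconf hf hg hk hh hX hT
  -- E1 : A² = K² type relation, E2 : G² = H², E3 : 2(AG - KH) = lam p (up to scaling)
  have hlp := hlam p hp
  have hAK : A ^ 2 = K ^ 2 := by nlinarith [E1]
  have hGH : G ^ 2 = H ^ 2 := by nlinarith [E2]
  have hdiff : A * G - K * H = lam p / 2 := by nlinarith [E3]
  have hzero : (A * G + K * H) * (A * G - K * H) = 0 := by nlinarith [hAK, hGH]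
  have hsum : A * G + K * H = 0 := by
    rcases mul_eq_zero.1 hzero with h0 | h0
    · exact h0
    · exfalso; rw [hdiff] at h0; linarith
  have hAG : A * G = lam p / 4 := by linarith
  have hKH : K * H = -(lam p / 4) := by linarith
  have hcross : A * H + G * K = 0 := by
    have hsq : (A * H + G * K) ^ 2 = 0 := by nlinarith [hAK, hGH, hAG, hKH]
    have := pow_eq_zero_iff (n := 2) (by norm_num) |>.1 hsq
    linarith [this]
  refine ⟨by rw [hAG]; linarith, by rw [hKH]; linarith, hcross, by linarith⟩
end
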